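/- Let K be a number field and {α_i mod I_i}_{i=1}^k an exact covering system of O_K in which the ideals are not all equal. Then each modulus I_i occurs at least min{ G(I_i / (I_i + I_j)) : I_j ≠ I_i } times, where for an ideal I, G(I) = max{ N(𝔭^r) : 𝔭 prime, r ≥ 0, 𝔭^r ∣ I }. -/

import Mathlib

open NumberField

set_option maxHeartbeats 2000000
set_option synthInstance.maxHeartbeats 800000
set_option linter.unusedSectionVars false

namespace ECMRHelp

variable {K : Type*} [Field K] [NumberField K]

lemma mem_map_iff_of_le {M N : Ideal (𝓞 K)} (h : M ≤ N) (x : 𝓞 K) :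
    Ideal.Quotient.mk M x ∈ N.map (Ideal.Quotient.mk M) ↔ x ∈ N := by
  constructor
  · intro hx
    obtain ⟨u, hu, hux⟩ :=
      (Ideal.mem_map_iff_of_surjective _ Ideal.Quotient.mk_surjective).mp hx
    have : x - u ∈ M := Ideal.Quotient.eq.mp hux.symm
    have hxu : x = u + (x - u) := by ring
    rw [hxu]
    exact N.add_mem hu (h this)
  · intro hx
    exact Ideal.mem_map_of_mem _ hx

lemma exists_avoid {I Q C : Ideal (𝓞 K)} (hI : I = Q * C) (hIbot : I ≠ ⊥)
    (B : Finset ((𝓞 K) ⧸ I)) (hB : B.card < Ideal.absNorm Q) :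
    ∃ d : 𝓞 K, d ∈ C ∧ Ideal.Quotient.mk I d ∉ B := by
  have hInorm : Ideal.absNorm I ≠ 0 := by
    rwa [ne_eq, Ideal.absNorm_eq_zero_iff]
  have hfin : Finite ((𝓞 K) ⧸ I) := (Ideal.absNorm_ne_zero_iff I).mp hInorm
  have hIC : I ≤ C := hI ▸ Ideal.mul_le_right
  have hCbot : C ≠ ⊥ := by
    rintro rfl
    rw [Ideal.mul_bot] at hI
    exact hIbot hI
  have hCnorm : Ideal.absNorm C ≠ 0 := by
    rwa [ne_eq, Ideal.absNorm_eq_zero_iff]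
  set g : (𝓞 K) ⧸ I →+* (𝓞 K) ⧸ C := Ideal.Quotient.factor hIC with hg
  set gg : (𝓞 K) ⧸ I →+ (𝓞 K) ⧸ C := AddMonoidHom.mk' g (map_add g) with hgg
  have hsurj : Function.Surjective gg := by
    intro y
    obtain ⟨x, rfl⟩ := Ideal.Quotient.mk_surjective y
    exact ⟨Ideal.Quotient.mk I x, Ideal.Quotient.factor_mk hIC x⟩
  have hcard1 : Nat.card ((𝓞 K) ⧸ I) = Ideal.absNorm I := by
    rw [Ideal.absNorm_apply, Submodule.cardQuot_apply]
  have hcard2 : Nat.card ((𝓞 K) ⧸ C) = Ideal.absNorm C := by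
    rw [Ideal.absNorm_apply, Submodule.cardQuot_apply]
  have hLag : Nat.card ((𝓞 K) ⧸ I)
      = Nat.card (((𝓞 K) ⧸ I) ⧸ gg.ker) * Nat.card gg.ker :=
    AddSubgroup.card_eq_card_quotient_mul_card_addSubgroup _
  have hquot : Nat.card (((𝓞 K) ⧸ I) ⧸ gg.ker) = Ideal.absNorm C := by
    rw [Nat.card_congr (QuotientAddGroup.quotientKerEquivOfSurjective gg hsurj).toEquiv, hcard2]
  have hIN : Ideal.absNorm I = Ideal.absNorm Q * Ideal.absNorm C := by
    rw [hI, map_mul]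
  have hker : Nat.card gg.ker = Ideal.absNorm Q := by
    have := hLag
    rw [hcard1, hquot, hIN, mul_comm (Ideal.absNorm Q)] at this
    exact (Nat.eq_of_mul_eq_mul_left (Nat.pos_of_ne_zero hCnorm) this).symm
  have hnotsub : ¬ ((gg.ker : Set ((𝓞 K) ⧸ I)) ⊆ ↑B) := by
    intro hsub
    have h1 : Nat.card gg.ker = (gg.ker : Set ((𝓞 K) ⧸ I)).ncard :=
      Nat.card_coe_set_eq _
    have h2 : (gg.ker : Set ((𝓞 K) ⧸ I)).ncard ≤ (↑B : Set ((𝓞 K) ⧸ I)).ncard :=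
      Set.ncard_le_ncard hsub (B.finite_toSet)
    rw [Set.ncard_coe_finset] at h2
    omega
  obtain ⟨y, hyker, hyB⟩ := Set.not_subset.mp hnotsub
  obtain ⟨d, rfl⟩ := Ideal.Quotient.mk_surjective y
  refine ⟨d, ?_, hyB⟩
  have : g (Ideal.Quotient.mk I d) = 0 := hyker
  rw [hg, Ideal.Quotient.factor_mk, Ideal.Quotient.eq_zero_iff_mem] at this
  exact this


lemma indep {I : Ideal (𝓞 K)} (P : Finset (Ideal (𝓞 K)))
    (Q C : Ideal (𝓞 K) → Ideal (𝓞 K))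
    (hQC : ∀ 𝔭 ∈ P, I = Q 𝔭 * C 𝔭)
    (hQ0 : ∀ 𝔭 ∈ P, Q 𝔭 ≠ 0)
    (hcop : ∀ 𝔭 ∈ P, ∀ 𝔮 ∈ P, 𝔭 ≠ 𝔮 → Q 𝔭 ⊔ Q 𝔮 = ⊤)
    (c : Ideal (𝓞 K) → 𝓞 K) (hc : ∀ 𝔭 ∈ P, c 𝔭 ∈ C 𝔭)
    (hsum : (∑ 𝔭 ∈ P, c 𝔭) ∈ I) : ∀ 𝔭 ∈ P, c 𝔭 ∈ I := by
  classical
  intro 𝔭 h𝔭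
  set Kp : Ideal (𝓞 K) := ∏ 𝔮 ∈ P.erase 𝔭, Q 𝔮 with hKp
  have hKdvd : Kp ∣ I := by
    apply Finset.prod_dvd_of_coprime
    · intro a ha b hb hab
      have ha' : a ∈ P := Finset.mem_of_mem_erase ha
      have hb' : b ∈ P := Finset.mem_of_mem_erase hb
      exact Ideal.isCoprime_iff_sup_eq.mpr (hcop a ha' b hb' hab)
    · intro 𝔮 h𝔮
      exact ⟨C 𝔮, hQC 𝔮 (Finset.mem_of_mem_erase h𝔮)⟩
  obtain ⟨J, hJ⟩ := hKdvd
  have hCJ : ∀ 𝔮 ∈ P.erase 𝔭, C 𝔮 ≤ J := by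
    intro 𝔮 h𝔮
    obtain ⟨K'', hK''⟩ := Finset.dvd_prod_of_mem Q h𝔮
    have h1 : Q 𝔮 * C 𝔮 = Q 𝔮 * (K'' * J) := by
      rw [← hQC 𝔮 (Finset.mem_of_mem_erase h𝔮), hJ, hKp, hK'', mul_assoc]
    have h2 : C 𝔮 = K'' * J :=
      mul_left_cancel₀ (hQ0 𝔮 (Finset.mem_of_mem_erase h𝔮)) h1
    rw [h2]
    exact Ideal.mul_le_right
  have hIJ : I ≤ J := hJ ▸ Ideal.mul_le_right
  have hcpJ : c 𝔭 ∈ J := by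
    have heq : c 𝔭 = (∑ 𝔮 ∈ P, c 𝔮) - ∑ 𝔮 ∈ P.erase 𝔭, c 𝔮 := by
      rw [← Finset.add_sum_erase _ c h𝔭]
      ring
    rw [heq]
    exact Submodule.sub_mem _ (hIJ hsum)
      (Submodule.sum_mem _ (fun 𝔮 h𝔮 => hCJ 𝔮 h𝔮 (hc 𝔮 (Finset.mem_of_mem_erase h𝔮))))
  have hQK : Q 𝔭 ⊔ Kp = ⊤ := by
    rw [hKp]
    exact Ideal.sup_prod_eq_top (fun 𝔮 h𝔮 =>
      hcop 𝔭 h𝔭 𝔮 (Finset.mem_of_mem_erase h𝔮) (Ne.symm (Finset.ne_of_mem_erase h𝔮)))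
  have hone : (1 : 𝓞 K) ∈ Q 𝔭 ⊔ Kp := by rw [hQK]; exact Submodule.mem_top
  obtain ⟨q, hq, kk, hkk, hqk⟩ := Submodule.mem_sup.mp hone
  have hcp : c 𝔭 = q * c 𝔭 + kk * c 𝔭 := by
    rw [← add_mul, hqk, one_mul]
  rw [hcp]
  apply Submodule.add_mem
  · rw [hQC 𝔭 h𝔭]
    exact Ideal.mul_mem_mul hq (hc 𝔭 h𝔭)
  · rw [hJ]
    exact Ideal.mul_mem_mul hkk hcpJ

lemma box_invariant {P : Finset (Ideal (𝓞 K))} (δ : Ideal (𝓞 K) → 𝓞 K)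
    (f : 𝓞 K → ℤ) (x : 𝓞 K) {𝔭 : Ideal (𝓞 K)} (h𝔭 : 𝔭 ∈ P)
    (hf : ∀ y, f (y + δ 𝔭) = f y) :
    ∑ S ∈ P.powerset, (-1 : ℤ) ^ S.card * f (x + ∑ 𝔮 ∈ S, δ 𝔮) = 0 := by
  classical
  rw [← Finset.insert_erase h𝔭,
    Finset.sum_powerset_insert (Finset.notMem_erase 𝔭 P)]
  rw [← Finset.sum_add_distrib]
  apply Finset.sum_eq_zero
  intro S hS
  have h𝔭S : 𝔭 ∉ S := fun h =>
    Finset.notMem_erase 𝔭 P (Finset.mem_powerset.mp hS h)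
  rw [Finset.card_insert_of_notMem h𝔭S, Finset.sum_insert h𝔭S, pow_succ]
  have : x + (δ 𝔭 + ∑ 𝔮 ∈ S, δ 𝔮) = (x + ∑ 𝔮 ∈ S, δ 𝔮) + δ 𝔭 := by ring
  rw [this, hf]
  ring

end ECMRHelp



/-- `GQuot A B` is `G (A / B)` for ideals `B ∣ A` of the ring of integers:
the largest norm of a prime power ideal `𝔭 ^ r` dividing the quotient ideal
`A / B`, i.e. with `𝔭 ^ r * B ∣ A`. -/
noncomputable def GQuot {K : Type*} [Field K] [NumberField K]
    (A B : Ideal (𝓞 K)) : ℕ :=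
  sSup {m : ℕ | ∃ (𝔭 : Ideal (𝓞 K)) (r : ℕ), 𝔭.IsPrime ∧ 𝔭 ^ r * B ∣ A ∧
    m = (𝔭 ^ r).absNorm}

/-- In an exact covering system of the ring of integers of a number field in
which the ideals are not all equal, each modulus `I i` occurs at least
`min { G (I i / (I i + I j)) : I j ≠ I i }` times. -/
theorem exact_cover_modulus_repeats_ideal {K : Type*} [Field K] [NumberField K]
    {k : ℕ} (α : Fin k → 𝓞 K) (I : Fin k → Ideal (𝓞 K))
    (hbot : ∀ i, I i ≠ ⊥) (htop : ∀ i, I i ≠ ⊤)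
    (hcover : ∀ x : 𝓞 K, ∃! i : Fin k, x - α i ∈ I i)
    (hne : ∃ i j : Fin k, I i ≠ I j) :
    ∀ i : Fin k,
      sInf {m : ℕ | ∃ j : Fin k, I j ≠ I i ∧ m = GQuot (I i) (I i + I j)} ≤
        Nat.card {j : Fin k // I j = I i} := by
  classical
  intro i
  by_contra hcon
  set t := Nat.card {j : Fin k // I j = I i} with htdef
  -- basic facts
  set T : Finset (Fin k) := Finset.univ.filter (fun s => I s = I i) with hTdef
  have hiT : i ∈ T := by simp [hTdef]
  have ht' : T.card = t := by
    rw [htdef, Nat.card_eq_fintype_card, Fintype.card_subtype]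
  have ht1 : 1 ≤ t := by
    rw [← ht']
    exact Finset.card_pos.mpr ⟨i, hiT⟩
  have hgt : ∀ j, I j ≠ I i → t < GQuot (I i) (I i + I j) := by
    intro j hj
    have h1 : sInf {m : ℕ | ∃ j : Fin k, I j ≠ I i ∧ m = GQuot (I i) (I i + I j)}
        ≤ GQuot (I i) (I i + I j) := Nat.sInf_le ⟨j, hj, rfl⟩
    omega
  have hJne : ∃ j, I j ≠ I i := by
    by_contra h
    push_neg at h
    obtain ⟨a, b, hab⟩ := hne
    exact hab ((h a).trans (h b).symm)
  -- extraction of prime powers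
  have hextract : ∀ j : Fin k, I j ≠ I i → ∃ 𝔭 r, 𝔭.IsPrime ∧ 𝔭 ≠ ⊥ ∧ 1 ≤ r ∧
      𝔭 ^ r * (I i + I j) ∣ I i ∧ t < ((𝔭 : Ideal (𝓞 K)) ^ r).absNorm := by
    intro j hj
    have h1 : t < GQuot (I i) (I i + I j) := hgt j hj
    rw [GQuot] at h1
    have hW1 : (1 : ℕ) ∈ {m : ℕ | ∃ (𝔭 : Ideal (𝓞 K)) (r : ℕ), 𝔭.IsPrime ∧
        𝔭 ^ r * (I i + I j) ∣ I i ∧ m = (𝔭 ^ r).absNorm} := by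
      refine ⟨⊥, 0, Ideal.bot_prime, ?_, ?_⟩
      · rw [pow_zero, one_mul]
        exact Ideal.dvd_iff_le.mpr (by rw [Submodule.add_eq_sup]; exact le_sup_left)
      · rw [pow_zero, map_one]
    have hIiN : 0 < (I i).absNorm := by
      rw [Nat.pos_iff_ne_zero, ne_eq, Ideal.absNorm_eq_zero_iff]
      exact hbot i
    have hWbdd : BddAbove {m : ℕ | ∃ (𝔭 : Ideal (𝓞 K)) (r : ℕ), 𝔭.IsPrime ∧
        𝔭 ^ r * (I i + I j) ∣ I i ∧ m = (𝔭 ^ r).absNorm} := by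
      refine ⟨(I i).absNorm, ?_⟩
      rintro m ⟨𝔭, r, hp, hdvd, rfl⟩
      have hdvd2 : 𝔭 ^ r ∣ I i := dvd_trans (dvd_mul_right _ _) hdvd
      have hle : I i ≤ 𝔭 ^ r := Ideal.le_of_dvd hdvd2
      exact Nat.le_of_dvd hIiN (Ideal.absNorm_dvd_absNorm_of_le hle)
    have hmem := Nat.sSup_mem ⟨1, hW1⟩ hWbdd
    obtain ⟨𝔭, r, hp, hdvd, hmeq⟩ := hmem
    rw [hmeq] at h1
    have hpb : 𝔭 ≠ ⊥ := by
      rintro rfl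
      rcases Nat.eq_zero_or_pos r with hr | hr
      · subst hr
        rw [pow_zero, map_one] at h1
        omega
      · have hbp : (⊥ : Ideal (𝓞 K)) ^ r = ⊥ := by
          rw [← Submodule.zero_eq_bot, zero_pow (Nat.pos_iff_ne_zero.mp hr)]
        rw [hbp, ← Submodule.zero_eq_bot, zero_mul] at hdvd
        have := Ideal.le_of_dvd hdvd
        rw [Submodule.zero_eq_bot, le_bot_iff] at this
        exact hbot i this
    have hr1' : 1 ≤ r := by
      rcases Nat.eq_zero_or_pos r with hr | hr
      · subst hr
        rw [pow_zero, map_one] at h1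
        omega
      · exact hr
    exact ⟨𝔭, r, hp, hpb, hr1', hdvd, h1⟩
  choose! p rr hprime hpbot hr1 hdvd hnorm using hextract
  set Jset : Finset (Fin k) := Finset.univ.filter (fun j => I j ≠ I i) with hJdef
  set P : Finset (Ideal (𝓞 K)) := Jset.image p with hPdef
  have hPmem : ∀ j, I j ≠ I i → p j ∈ P := by
    intro j hj
    exact Finset.mem_image_of_mem p (by simp [hJdef, hj])
  have hPwit : ∀ 𝔭 ∈ P, ∃ j, I j ≠ I i ∧ p j = 𝔭 := by
    intro 𝔭 h𝔭
    obtain ⟨j, hj, hpj⟩ := Finset.mem_image.mp h𝔭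
    exact ⟨j, (Finset.mem_filter.mp hj).2, hpj⟩
  have hPne : P.Nonempty := by
    obtain ⟨j, hj⟩ := hJne
    exact ⟨p j, hPmem j hj⟩
  set ρ : Ideal (𝓞 K) → ℕ :=
    fun 𝔭 => sInf {m : ℕ | ∃ j, (I j ≠ I i ∧ p j = 𝔭) ∧ rr j = m} with hρdef
  have hρwit : ∀ 𝔭 ∈ P, ∃ j, (I j ≠ I i ∧ p j = 𝔭) ∧ rr j = ρ 𝔭 := by
    intro 𝔭 h𝔭
    obtain ⟨j, hj, hpj⟩ := hPwit 𝔭 h𝔭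
    have hne2 : {m : ℕ | ∃ j, (I j ≠ I i ∧ p j = 𝔭) ∧ rr j = m}.Nonempty :=
      ⟨rr j, j, ⟨hj, hpj⟩, rfl⟩
    exact Nat.sInf_mem hne2
  have hρle : ∀ j, I j ≠ I i → ρ (p j) ≤ rr j := by
    intro j hj
    exact Nat.sInf_le ⟨j, ⟨hj, rfl⟩, rfl⟩
  set Q : Ideal (𝓞 K) → Ideal (𝓞 K) := fun 𝔭 => 𝔭 ^ ρ 𝔭 with hQdef
  have hQdvd : ∀ 𝔭 ∈ P, Q 𝔭 ∣ I i := by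
    intro 𝔭 h𝔭
    obtain ⟨j, ⟨hj, hpj⟩, hrj⟩ := hρwit 𝔭 h𝔭
    have := hdvd j hj
    rw [hpj, hrj] at this
    exact dvd_trans (dvd_mul_right _ _) this
  have hQnorm : ∀ 𝔭 ∈ P, t < (Q 𝔭).absNorm := by
    intro 𝔭 h𝔭
    obtain ⟨j, ⟨hj, hpj⟩, hrj⟩ := hρwit 𝔭 h𝔭
    have := hnorm j hj
    rwa [hpj, hrj] at this
  have hQ0 : ∀ 𝔭 ∈ P, Q 𝔭 ≠ 0 := by
    intro 𝔭 h𝔭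
    obtain ⟨j, ⟨hj, hpj⟩, hrj⟩ := hρwit 𝔭 h𝔭
    have h0 : 𝔭 ≠ 0 := by
      rw [Submodule.zero_eq_bot, ← hpj]
      exact hpbot j hj
    exact pow_ne_zero _ h0
  have hcop : ∀ 𝔭 ∈ P, ∀ 𝔮 ∈ P, 𝔭 ≠ 𝔮 → Q 𝔭 ⊔ Q 𝔮 = ⊤ := by
    intro 𝔭 h𝔭 𝔮 h𝔮 hne'
    obtain ⟨j1, ⟨hj1, hpj1⟩, _⟩ := hρwit 𝔭 h𝔭
    obtain ⟨j2, ⟨hj2, hpj2⟩, _⟩ := hρwit 𝔮 h𝔮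
    have hm1 : 𝔭.IsMaximal := by
      rw [← hpj1]
      exact Ideal.IsPrime.isMaximal (hprime j1 hj1) (hpbot j1 hj1)
    have hm2 : 𝔮.IsMaximal := by
      rw [← hpj2]
      exact Ideal.IsPrime.isMaximal (hprime j2 hj2) (hpbot j2 hj2)
    exact Ideal.pow_sup_pow_eq_top (Ideal.IsMaximal.coprime_of_ne hm1 hm2 hne')
  have hCex : ∀ 𝔭 ∈ P, ∃ Cp, I i = Q 𝔭 * Cp := fun 𝔭 h => hQdvd 𝔭 h
  choose! C hC using hCex
  have hCle : ∀ j, I j ≠ I i → C (p j) ≤ I i + I j := by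
    intro j hj
    have h𝔭P : p j ∈ P := hPmem j hj
    have h1 : p j ^ rr j * (I i + I j) ∣ Q (p j) * C (p j) := by
      rw [← hC (p j) h𝔭P]
      exact hdvd j hj
    have hsplit : p j ^ rr j = p j ^ ρ (p j) * p j ^ (rr j - ρ (p j)) := by
      rw [← pow_add, Nat.add_sub_cancel' (hρle j hj)]
    rw [hsplit, mul_assoc, hQdef] at h1
    have h0 : p j ^ ρ (p j) ≠ 0 := by
      apply pow_ne_zero
      rw [Submodule.zero_eq_bot]
      exact hpbot j hj
    have h2 : p j ^ (rr j - ρ (p j)) * (I i + I j) ∣ C (p j) :=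
      (mul_dvd_mul_iff_left h0).mp h1
    exact le_trans (Ideal.le_of_dvd h2) Ideal.mul_le_right

  -- the big finite quotient
  set M : Ideal (𝓞 K) := ∏ s ∈ Finset.univ, I s with hMdef
  have hM0 : M ≠ ⊥ := by
    rw [hMdef, ← Submodule.zero_eq_bot]
    rw [Finset.prod_ne_zero_iff]
    intro s _
    rw [Submodule.zero_eq_bot]
    exact hbot s
  have hMle : ∀ s, M ≤ I s := fun s =>
    Ideal.le_of_dvd (Finset.dvd_prod_of_mem _ (Finset.mem_univ s))
  have hfinM : Finite ((𝓞 K) ⧸ M) := by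
    refine (Ideal.absNorm_ne_zero_iff M).mp ?_
    rw [ne_eq, Ideal.absNorm_eq_zero_iff]
    exact hM0
  set mkM := Ideal.Quotient.mk M with hmkM
  set Z : Finset ((𝓞 K) ⧸ M) :=
    Set.Finite.toFinset
      (Set.toFinite (((I i).map mkM : Ideal ((𝓞 K) ⧸ M)) : Set ((𝓞 K) ⧸ M)))
    with hZdef
  have hZmem : ∀ z, z ∈ Z ↔ z ∈ (I i).map mkM := by
    intro z
    rw [hZdef, Set.Finite.mem_toFinset, SetLike.mem_coe]
  have hZ0 : (0 : (𝓞 K) ⧸ M) ∈ Z := (hZmem 0).mpr (Submodule.zero_mem _)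
  have hZcard : 0 < Z.card := Finset.card_pos.mpr ⟨0, hZ0⟩
  set n : Fin k → 𝓞 K → ℕ := fun s x =>
    (Z.filter (fun z => mkM x + z - mkM (α s) ∈ (I s).map mkM)).card with hndef
  have hbridge : ∀ (N : Ideal (𝓞 K)), M ≤ N → ∀ y : 𝓞 K,
      (mkM y ∈ N.map mkM ↔ y ∈ N) := fun N hN y => ECMRHelp.mem_map_iff_of_le hN y
  have huniq : ∀ y : 𝓞 K,
      (Finset.univ.filter (fun s => y - α s ∈ I s)).card = 1 := by
    intro y
    obtain ⟨s₀, hs₀, huni⟩ := hcover y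
    rw [Finset.card_eq_one]
    refine ⟨s₀, ?_⟩
    ext s
    simp only [Finset.mem_filter, Finset.mem_univ, true_and, Finset.mem_singleton]
    exact ⟨fun h => huni s h, fun h => h ▸ hs₀⟩
  have hident : ∀ x : 𝓞 K, ∑ s, n s x = Z.card := by
    intro x
    have hswap : ∑ s, n s x = ∑ z ∈ Z, (Finset.univ.filter
        (fun s => mkM x + z - mkM (α s) ∈ (I s).map mkM)).card := by
      simp only [hndef, Finset.card_filter]
      exact Finset.sum_comm
    rw [hswap]
    have hone : ∀ z ∈ Z, (Finset.univ.filter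
        (fun s => mkM x + z - mkM (α s) ∈ (I s).map mkM)).card = 1 := by
      intro z hz
      obtain ⟨w, hw, rfl⟩ := (Ideal.mem_map_iff_of_surjective _
        Ideal.Quotient.mk_surjective).mp ((hZmem z).mp hz)
      have hcond : ∀ s, (mkM x + mkM w - mkM (α s) ∈ (I s).map mkM) ↔
          ((x + w) - α s ∈ I s) := by
        intro s
        have he : mkM x + mkM w - mkM (α s) = mkM ((x + w) - α s) := by
          rw [map_sub, map_add]
        rw [he]
        exact hbridge (I s) (hMle s) _
      have : (Finset.univ.filter
          (fun s => mkM x + mkM w - mkM (α s) ∈ (I s).map mkM)) =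
          (Finset.univ.filter (fun s => (x + w) - α s ∈ I s)) := by
        ext s
        simp only [Finset.mem_filter, Finset.mem_univ, true_and]
        exact hcond s
      rw [this]
      exact huniq (x + w)
    rw [Finset.sum_congr rfl hone, Finset.sum_const, smul_eq_mul, mul_one]
  have hP1 : ∀ s, I s = I i → ∀ x : 𝓞 K,
      n s x = if x - α s ∈ I i then Z.card else 0 := by
    intro s hs x
    by_cases h : x - α s ∈ I i
    · rw [if_pos h, hndef]
      simp only [hs]
      have : Z.filter (fun z => mkM x + z - mkM (α s) ∈ (I i).map mkM) = Z := by
        apply Finset.filter_true_of_mem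
        intro z hz
        have hz' := (hZmem z).mp hz
        have he : mkM x + z - mkM (α s) = mkM (x - α s) + z := by
          rw [map_sub]; ring
        rw [he]
        exact Submodule.add_mem _ (Ideal.mem_map_of_mem _ h) hz'
      rw [this]
    · rw [if_neg h, hndef]
      rw [Finset.card_eq_zero, Finset.filter_eq_empty_iff]
      intro z hz hcond
      obtain ⟨w, hw, rfl⟩ := (Ideal.mem_map_iff_of_surjective _
        Ideal.Quotient.mk_surjective).mp ((hZmem z).mp hz)
      rw [hs] at hcond
      have he : mkM x + mkM w - mkM (α s) = mkM (x + w - α s) := by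
        rw [map_sub, map_add]
      rw [he] at hcond
      have h1 : x + w - α s ∈ I i := (hbridge (I i) (hMle i) _).mp hcond
      have h2 : x - α s = (x + w - α s) - w := by ring
      exact h (h2 ▸ Submodule.sub_mem _ h1 hw)
  have hP2 : ∀ s (x d : 𝓞 K), d ∈ I i + I s → n s (x + d) = n s x := by
    intro s x d hd
    rw [Submodule.add_eq_sup] at hd
    obtain ⟨a, ha, b, hb, hab⟩ := Submodule.mem_sup.mp hd
    rw [hndef]
    have hiff : ∀ z, (mkM (x + d) + z - mkM (α s) ∈ (I s).map mkM) ↔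
        (mkM x + (z + mkM a) - mkM (α s) ∈ (I s).map mkM) := by
      intro z
      have he : mkM (x + d) + z - mkM (α s) =
          (mkM x + (z + mkM a) - mkM (α s)) + mkM b := by
        rw [← hab, map_add, map_add]
        ring
      rw [he]
      exact Submodule.add_mem_iff_left _ (Ideal.mem_map_of_mem _ hb)
    apply Finset.card_nbij' (fun z => z + mkM a) (fun z => z - mkM a)
    · intro z hz
      rw [Finset.mem_coe, Finset.mem_filter] at hz ⊢
      exact ⟨(hZmem _).mpr (Submodule.add_mem _ ((hZmem z).mp hz.1)
          (Ideal.mem_map_of_mem _ ha)), (hiff z).mp hz.2⟩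
    · intro z hz
      rw [Finset.mem_coe, Finset.mem_filter] at hz ⊢
      constructor
      · exact (hZmem _).mpr (Submodule.sub_mem _ ((hZmem z).mp hz.1)
          (Ideal.mem_map_of_mem _ ha))
      · rw [hiff (z - mkM a), sub_add_cancel]
        exact hz.2
    · intro z _
      exact add_sub_cancel_right z (mkM a)
    · intro z _
      exact sub_add_cancel z (mkM a)

  have hdistinct : ∀ s, I s = I i → α s - α i ∈ I i → s = i := by
    intro s hs hmem
    obtain ⟨s₀, hs₀, huni⟩ := hcover (α s)
    have h1 : s = s₀ := huni s
      (show α s - α s ∈ I s by rw [sub_self]; exact Submodule.zero_mem _)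
    have h2 : i = s₀ := huni i hmem
    rw [h1, h2]
  set Dec : Fin k → Prop := fun s => ∃ b : Ideal (𝓞 K) → 𝓞 K,
      (∀ 𝔭 ∈ P, b 𝔭 ∈ C 𝔭) ∧ (α s - α i - ∑ 𝔭 ∈ P, b 𝔭 ∈ I i) with hDecdef
  set bfun : Fin k → Ideal (𝓞 K) → 𝓞 K := fun s =>
    if h : Dec s then h.choose else fun _ => 0 with hbfundef
  have hbfun : ∀ s, Dec s → (∀ 𝔭 ∈ P, bfun s 𝔭 ∈ C 𝔭) ∧
      (α s - α i - ∑ 𝔭 ∈ P, bfun s 𝔭 ∈ I i) := by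
    intro s h
    have he : bfun s = h.choose := by rw [hbfundef]; simp only [dif_pos h]
    rw [he]
    exact h.choose_spec
  set mkI := Ideal.Quotient.mk (I i) with hmkI
  set B : Ideal (𝓞 K) → Finset ((𝓞 K) ⧸ (I i)) := fun 𝔭 =>
    insert 0 ((T.erase i).image (fun s => mkI (bfun s 𝔭))) with hBdef
  have hBcard : ∀ 𝔭, (B 𝔭).card ≤ t := by
    intro 𝔭
    have h1 : (B 𝔭).card ≤ ((T.erase i).image (fun s => mkI (bfun s 𝔭))).card + 1 :=
      Finset.card_insert_le _ _
    have h2 : ((T.erase i).image (fun s => mkI (bfun s 𝔭))).card ≤ (T.erase i).card :=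
      Finset.card_image_le
    have h3 : (T.erase i).card = T.card - 1 := Finset.card_erase_of_mem hiT
    omega
  have hδex : ∀ 𝔭 ∈ P, ∃ d, d ∈ C 𝔭 ∧ mkI d ∉ B 𝔭 := by
    intro 𝔭 h𝔭
    exact ECMRHelp.exists_avoid (hC 𝔭 h𝔭) (hbot i) (B 𝔭)
      (lt_of_le_of_lt (hBcard 𝔭) (hQnorm 𝔭 h𝔭))
  choose! δ hδC hδB using hδex
  have hδ0 : ∀ 𝔭 ∈ P, δ 𝔭 ∉ I i := by
    intro 𝔭 h𝔭 hmem
    apply hδB 𝔭 h𝔭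
    have h0 : mkI (δ 𝔭) = 0 := Ideal.Quotient.eq_zero_iff_mem.mpr hmem
    rw [h0, hBdef]
    exact Finset.mem_insert_self 0 _
  have hindep : ∀ c : Ideal (𝓞 K) → 𝓞 K, (∀ 𝔭 ∈ P, c 𝔭 ∈ C 𝔭) →
      (∑ 𝔭 ∈ P, c 𝔭) ∈ I i → ∀ 𝔭 ∈ P, c 𝔭 ∈ I i :=
    fun c => ECMRHelp.indep P Q C hC hQ0 hcop c
  have hcorner : ∀ S ∈ P.powerset, ∀ s, I s = I i →
      (((α i + ∑ 𝔮 ∈ S, δ 𝔮) - α s ∈ I i) ↔ (S = ∅ ∧ s = i)) := by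
    intro S hS s hs
    have hSP : S ⊆ P := Finset.mem_powerset.mp hS
    constructor
    · intro hmem
      set c : Ideal (𝓞 K) → 𝓞 K := fun 𝔮 => if 𝔮 ∈ S then δ 𝔮 else 0 with hcdef
      have hsum_c : ∑ 𝔮 ∈ P, c 𝔮 = ∑ 𝔮 ∈ S, δ 𝔮 := by
        rw [hcdef, Finset.sum_ite_mem, Finset.inter_eq_right.mpr hSP]
      have hcC : ∀ 𝔮 ∈ P, c 𝔮 ∈ C 𝔮 := by
        intro 𝔮 h𝔮
        rw [hcdef]
        by_cases h : 𝔮 ∈ S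
        · simp only [if_pos h]; exact hδC 𝔮 h𝔮
        · simp only [if_neg h]; exact Submodule.zero_mem _
      by_cases hsi : s = i
      · refine ⟨?_, hsi⟩
        have hmem' := hmem
        rw [hsi] at hmem'
        have hσ : (∑ 𝔮 ∈ S, δ 𝔮) ∈ I i := by
          rwa [add_sub_cancel_left] at hmem'
        have hall := hindep c hcC (by rw [hsum_c]; exact hσ)
        by_contra hSne
        obtain ⟨𝔭, h𝔭⟩ := Finset.nonempty_iff_ne_empty.mpr hSne
        have hcm : c 𝔭 ∈ I i := hall 𝔭 (hSP h𝔭)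
        rw [hcdef] at hcm
        simp only [if_pos h𝔭] at hcm
        exact hδ0 𝔭 (hSP h𝔭) hcm
      · exfalso
        have hβ : α s - α i - ∑ 𝔮 ∈ P, c 𝔮 ∈ I i := by
          rw [hsum_c]
          have he : α s - α i - ∑ 𝔮 ∈ S, δ 𝔮 = -((α i + ∑ 𝔮 ∈ S, δ 𝔮) - α s) := by
            ring
          rw [he]
          exact Submodule.neg_mem _ hmem
        have hDs : Dec s := ⟨c, hcC, hβ⟩
        obtain ⟨hb1, hb2⟩ := hbfun s hDs
        have hdiffsum : ∑ 𝔮 ∈ P, (c 𝔮 - bfun s 𝔮) ∈ I i := by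
          rw [Finset.sum_sub_distrib]
          have h3 := Submodule.sub_mem _ hb2 hβ
          have he : (α s - α i - ∑ 𝔮 ∈ P, bfun s 𝔮) - (α s - α i - ∑ 𝔮 ∈ P, c 𝔮)
              = ∑ 𝔮 ∈ P, c 𝔮 - ∑ 𝔮 ∈ P, bfun s 𝔮 := by ring
          rwa [he] at h3
        have hall := hindep (fun 𝔮 => c 𝔮 - bfun s 𝔮)
          (fun 𝔮 h𝔮 => Submodule.sub_mem _ (hcC 𝔮 h𝔮) (hb1 𝔮 h𝔮)) hdiffsum
        have hbex : ∃ 𝔭 ∈ P, bfun s 𝔭 ∉ I i := by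
          by_contra hno
          push_neg at hno
          have hsb : ∑ 𝔮 ∈ P, bfun s 𝔮 ∈ I i :=
            Submodule.sum_mem _ (fun 𝔮 h𝔮 => hno 𝔮 h𝔮)
          have hβI : α s - α i ∈ I i := by
            have he : α s - α i
                = (α s - α i - ∑ 𝔮 ∈ P, bfun s 𝔮) + ∑ 𝔮 ∈ P, bfun s 𝔮 := by ring
            rw [he]
            exact Submodule.add_mem _ hb2 hsb
          exact hsi (hdistinct s hs hβI)
        obtain ⟨𝔭, h𝔭P, h𝔭b⟩ := hbex
        have hc𝔭 : c 𝔭 - bfun s 𝔭 ∈ I i := hall 𝔭 h𝔭P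
        have h𝔭S : 𝔭 ∈ S := by
          by_contra h
          rw [hcdef] at hc𝔭
          simp only [if_neg h] at hc𝔭
          rw [zero_sub] at hc𝔭
          exact h𝔭b ((Submodule.neg_mem_iff _).mp hc𝔭)
        apply hδB 𝔭 h𝔭P
        have hceq : c 𝔭 = δ 𝔭 := by rw [hcdef]; simp only [if_pos h𝔭S]
        rw [hceq] at hc𝔭
        have hqe : mkI (δ 𝔭) = mkI (bfun s 𝔭) := by
          rw [hmkI, Ideal.Quotient.mk_eq_mk_iff_sub_mem]
          exact hc𝔭
        rw [hqe, hBdef]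
        apply Finset.mem_insert_of_mem
        exact Finset.mem_image_of_mem _ (Finset.mem_erase.mpr ⟨hsi, by simp [hTdef, hs]⟩)
    · rintro ⟨rfl, rfl⟩
      rw [Finset.sum_empty, add_zero, sub_self]
      exact Submodule.zero_mem _
  -- the box computation
  have hboxJ : ∀ s, I s ≠ I i →
      ∑ S ∈ P.powerset, (-1 : ℤ) ^ S.card * (n s (α i + ∑ 𝔮 ∈ S, δ 𝔮) : ℤ) = 0 := by
    intro s hs
    have h𝔭P : p s ∈ P := hPmem s hs
    have hinv : ∀ y : 𝓞 K, ((fun y => (n s y : ℤ)) (y + δ (p s)))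
        = (fun y => (n s y : ℤ)) y := by
      intro y
      have hd : δ (p s) ∈ I i + I s := (hCle s hs) (hδC (p s) h𝔭P)
      simp only
      rw [hP2 s y (δ (p s)) hd]
    exact ECMRHelp.box_invariant δ (fun y => (n s y : ℤ)) (α i) h𝔭P hinv
  have hboxT : ∀ s, I s = I i →
      ∑ S ∈ P.powerset, (-1 : ℤ) ^ S.card * (n s (α i + ∑ 𝔮 ∈ S, δ 𝔮) : ℤ)
        = if s = i then (Z.card : ℤ) else 0 := by
    intro s hs
    have hterm : ∀ S ∈ P.powerset,
        (-1 : ℤ) ^ S.card * (n s (α i + ∑ 𝔮 ∈ S, δ 𝔮) : ℤ)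
        = if S = ∅ ∧ s = i then (-1 : ℤ) ^ S.card * (Z.card : ℤ) else 0 := by
      intro S hS
      rw [hP1 s hs]
      by_cases h : (α i + ∑ 𝔮 ∈ S, δ 𝔮) - α s ∈ I i
      · rw [if_pos h, if_pos ((hcorner S hS s hs).mp h)]
      · rw [if_neg h, if_neg (fun hc => h ((hcorner S hS s hs).mpr hc))]
        simp
    rw [Finset.sum_congr rfl hterm]
    by_cases hsi : s = i
    · rw [if_pos hsi]
      rw [Finset.sum_eq_single_of_mem ∅ (Finset.empty_mem_powerset P)
        (fun b _ hb => if_neg (fun hc => hb hc.1))]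
      rw [if_pos ⟨rfl, hsi⟩]
      simp
    · rw [if_neg hsi]
      apply Finset.sum_eq_zero
      intro S _
      exact if_neg (fun hc => hsi hc.2)
  -- final contradiction
  have h0 : (0 : ℤ) = ∑ S ∈ P.powerset, (-1 : ℤ) ^ S.card * (Z.card : ℤ) := by
    rw [← Finset.sum_mul, Finset.sum_powerset_neg_one_pow_card_of_nonempty hPne,
      zero_mul]
  have h1 : ∀ S ∈ P.powerset, (Z.card : ℤ)
      = ∑ s, (n s (α i + ∑ 𝔮 ∈ S, δ 𝔮) : ℤ) := by
    intro S _
    rw [← Nat.cast_sum, hident]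
  have h2 : (0 : ℤ) = ∑ s, ∑ S ∈ P.powerset,
      (-1 : ℤ) ^ S.card * (n s (α i + ∑ 𝔮 ∈ S, δ 𝔮) : ℤ) := by
    have hmid : ∑ S ∈ P.powerset, (-1 : ℤ) ^ S.card * (Z.card : ℤ)
        = ∑ S ∈ P.powerset, ∑ s, (-1 : ℤ) ^ S.card
            * (n s (α i + ∑ 𝔮 ∈ S, δ 𝔮) : ℤ) := by
      apply Finset.sum_congr rfl
      intro S hS
      rw [h1 S hS, Finset.mul_sum]
    rw [h0, hmid, Finset.sum_comm]
  have h3 : ∑ s, ∑ S ∈ P.powerset,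
      (-1 : ℤ) ^ S.card * (n s (α i + ∑ 𝔮 ∈ S, δ 𝔮) : ℤ) = (Z.card : ℤ) := by
    rw [Finset.sum_eq_single i]
    · rw [hboxT i rfl, if_pos rfl]
    · intro s _ hsi
      by_cases hs : I s = I i
      · rw [hboxT s hs, if_neg hsi]
      · exact hboxJ s hs
    · intro h
      exact absurd (Finset.mem_univ i) h
  rw [h3] at h2
  omega
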